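/- For every positive integer n and every k with 0 ≤ 2k ≤ n - 1, the number of integers N in the interval [F_n, F_{n+1}) that admit a representation N = ∑_{i∈S} F_i with S a finite set of positive integers, no two elements of S consecutive integers, and |S| = k + 1, equals C(n-1-k, k). -/

import Mathlib

/-- `F n` is the `n`-th Fibonacci number in the paper's indexing:
`F 1 = 1, F 2 = 2, F 3 = 3, F 4 = 5`, i.e. `F n = fib (n+1)`. -/
def F (n : ℕ) : ℕ := Nat.fib (n + 1)

open List Nat Finset

local instance : IsTrans ℕ fun a b ↦ b + 2 ≤ a where
  trans _a _b _c hba hcb := hcb.trans <| le_self_add.trans hba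

/-- The Zeckendorf list attached to a finset. -/
def zl (S : Finset ℕ) : List ℕ := ((S.image (· + 1)).sort (· ≤ ·)).reverse

lemma zl_rep (S : Finset ℕ) (hpos : ∀ i ∈ S, 0 < i) (hnc : ∀ i ∈ S, i + 1 ∉ S) : (zl S).IsZeckendorfRep := by
  have hmem : ∀ a, a ∈ (S.image (· + 1)).sort (· ≤ ·) ↔ a ∈ S.image (· + 1) := by
    intro a; exact Finset.mem_sort _
  have hpw : ((S.image (· + 1)).sort (· ≤ ·)).Pairwise (· < ·) := (Finset.sortedLT_sort _).pairwise
  have hpw2 : ((S.image (· + 1)).sort (· ≤ ·)).Pairwise (fun a b => a + 2 ≤ b) := by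
    refine hpw.imp_of_mem ?_
    intro a b ha hb hab
    rw [hmem, Finset.mem_image] at ha hb
    obtain ⟨i, hi, rfl⟩ := ha
    obtain ⟨j, hj, rfl⟩ := hb
    have : j ≠ i + 1 := fun h => hnc i hi (h ▸ hj)
    omega
  rw [IsZeckendorfRep, isChain_iff_pairwise, pairwise_append]
  refine ⟨pairwise_reverse.2 ?_, pairwise_singleton _ _, ?_⟩
  · exact hpw2.imp (by intro a b h; omega)
  · intro a ha b hb
    rw [List.mem_singleton] at hb
    subst hb
    rw [zl, mem_reverse, hmem, Finset.mem_image] at ha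
    obtain ⟨i, hi, rfl⟩ := ha
    have := hpos i hi
    show 0 + 2 ≤ i + 1
    omega

lemma zl_sum (S : Finset ℕ) : ((zl S).map fib).sum = ∑ i ∈ S, F i := by
  rw [zl, map_reverse, sum_reverse]
  have : (((S.image (· + 1)).sort (· ≤ ·)).map fib).sum = ∑ j ∈ S.image (· + 1), fib j := by
    rw [((Finset.sort_perm_toList (S.image (· + 1)) (· ≤ ·)).map fib).sum_eq,
      Finset.sum_map_toList]
  rw [this, Finset.sum_image (fun a _ b _ h => by omega)]
  rfl

lemma zl_inj {S₁ S₂ : Finset ℕ} (h : zl S₁ = zl S₂) : S₁ = S₂ := by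
  have h2 : ((S₁.image (· + 1)).sort (· ≤ ·)) = ((S₂.image (· + 1)).sort (· ≤ ·)) :=
    List.reverse_injective h
  have h3 : S₁.image (· + 1) = S₂.image (· + 1) := by
    rw [← Finset.sort_toFinset (S₁.image (· + 1)) (· ≤ ·), h2, Finset.sort_toFinset]
  have : Function.Injective (· + 1 : ℕ → ℕ) := fun a b h => by simpa using h
  exact Finset.image_injective this h3

lemma sum_F_injOn {S₁ S₂ : Finset ℕ}
    (hp1 : ∀ i ∈ S₁, 0 < i) (hp2 : ∀ i ∈ S₂, 0 < i)
    (h1 : ∀ i ∈ S₁, i + 1 ∉ S₁) (h2 : ∀ i ∈ S₂, i + 1 ∉ S₂)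
    (hsum : ∑ i ∈ S₁, F i = ∑ i ∈ S₂, F i) : S₁ = S₂ := by
  apply zl_inj
  have e1 := Nat.zeckendorf_sum_fib (zl_rep S₁ hp1 h1)
  have e2 := Nat.zeckendorf_sum_fib (zl_rep S₂ hp2 h2)
  rw [zl_sum] at e1 e2
  rw [← e1, ← e2, hsum]

lemma sum_F_lt {S : Finset ℕ} {n : ℕ} (hpos : ∀ i ∈ S, 0 < i) (hnc : ∀ i ∈ S, i + 1 ∉ S)
    (hle : ∀ i ∈ S, i ≤ n) : ∑ i ∈ S, F i < F (n + 1) := by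
  have := (zl_rep S hpos hnc).sum_fib_lt (n := n + 2) (by
    intro a ha
    have := List.mem_of_mem_head? ha
    rw [List.mem_append] at this
    rcases this with h | h
    · rw [zl, mem_reverse, Finset.mem_sort, Finset.mem_image] at h
      obtain ⟨i, hi, rfl⟩ := h
      have := hle i hi; omega
    · simp at h; omega)
  rw [zl_sum] at this
  exact this

/-- Non-consecutive `k`-subsets of `{0, ..., m-1}`. -/
def A (m k : ℕ) : Finset (Finset ℕ) :=
  ((Finset.range m).powerset).filter fun S => (∀ i ∈ S, i + 1 ∉ S) ∧ S.card = k

lemma mem_A {m k : ℕ} {S : Finset ℕ} :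
    S ∈ A m k ↔ S ⊆ Finset.range m ∧ (∀ i ∈ S, i + 1 ∉ S) ∧ S.card = k := by
  simp [A, Finset.mem_filter, Finset.mem_powerset]

lemma A_zero (m : ℕ) : A m 0 = {∅} := by
  ext S
  simp only [mem_A, Finset.mem_singleton, Finset.card_eq_zero]
  constructor
  · rintro ⟨-, -, rfl⟩; rfl
  · rintro rfl; simp

lemma A_card : ∀ m k, (A m k).card = (m + 1 - k).choose k := by
  intro m
  induction m using Nat.strong_induction_on with
  | _ m ih =>
    match m with
    | 0 =>
      intro k
      have : A 0 k = if k = 0 then {∅} else ∅ := by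
        ext S
        simp only [mem_A, Finset.range_zero, Finset.subset_empty]
        constructor
        · rintro ⟨rfl, -, rfl⟩; simp
        · intro hS
          rcases eq_or_ne k 0 with rfl | hk
          · simp at hS; subst hS; simp
          · simp [hk] at hS
      rcases eq_or_ne k 0 with rfl | hk
      · simp [this]
      · rw [this, if_neg hk]
        have : 1 - k = 0 := by omega
        rw [this]
        simp [Nat.choose_eq_zero_of_lt (by omega : 0 < k)]
    | 1 =>
      intro k
      have hsub : ∀ S : Finset ℕ, S ⊆ Finset.range 1 → S = ∅ ∨ S = {0} := by
        intro S hS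
        rcases Finset.eq_empty_or_nonempty S with h | h
        · exact Or.inl h
        · right
          apply Finset.Subset.antisymm hS
          obtain ⟨a, ha⟩ := h
          have : a = 0 := by have := hS ha; simp at this; exact this
          subst this
          intro x hx; simp at hx; subst hx; exact ha
      match k with
      | 0 => simp [A_zero]
      | 1 =>
        have : A 1 1 = {({0} : Finset ℕ)} := by
          ext S
          simp only [mem_A, Finset.mem_singleton]
          constructor
          · rintro ⟨h1, -, h3⟩
            rcases hsub S h1 with rfl | rfl
            · simp at h3
            · rfl
          · rintro rfl; refine ⟨by simp, by simp, rfl⟩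
        simp [this]
      | (k+2) =>
        have : A 1 (k+2) = ∅ := by
          ext S
          simp only [mem_A, Finset.notMem_empty, iff_false, not_and]
          intro h1 _
          rcases hsub S h1 with rfl | rfl <;> simp <;> omega
        rw [this]
        simp [Nat.choose_eq_zero_of_lt (by omega : 1 - (k+2) < k + 2)]
    | (m+2) =>
      intro k
      match k with
      | 0 => simp [A_zero]
      | (k+1) =>
        have hdecomp : A (m+2) (k+1) = A (m+1) (k+1) ∪ (A m k).image (insert (m+1)) := by
          ext S
          simp only [Finset.mem_union, Finset.mem_image, mem_A]
          constructor
          · rintro ⟨h1, h2, h3⟩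
            by_cases hm : m + 1 ∈ S
            · right
              refine ⟨S.erase (m+1), ⟨?_, ?_, ?_⟩, ?_⟩
              · intro i hi
                have hiS := Finset.mem_of_mem_erase hi
                have hne := Finset.ne_of_mem_erase hi
                have h4 := h1 hiS
                simp only [Finset.mem_range] at h4 ⊢
                have hmm : m ∉ S := fun hmem => h2 m hmem hm
                have : i ≠ m := fun h => hmm (h ▸ hiS)
                omega
              · intro i hi
                have hiS := Finset.mem_of_mem_erase hi
                intro hcon
                exact h2 i hiS (Finset.mem_of_mem_erase hcon)
              · rw [Finset.card_erase_of_mem hm, h3]; omega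
              · rw [Finset.insert_erase hm]
            · left
              refine ⟨?_, h2, h3⟩
              intro i hi
              have := h1 hi
              simp only [Finset.mem_range] at this ⊢
              have : i ≠ m + 1 := fun h => hm (h ▸ hi)
              omega
          · rintro (⟨h1, h2, h3⟩ | ⟨S', ⟨h1, h2, h3⟩, rfl⟩)
            · exact ⟨h1.trans (by intro x; simp only [Finset.mem_range]; omega), h2, h3⟩
            · have hnotin : m + 1 ∉ S' := by
                intro h; have := h1 h; simp at this
              refine ⟨?_, ?_, ?_⟩
              · intro i hi
                rcases Finset.mem_insert.1 hi with rfl | hi'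
                · simp
                · have := h1 hi'; simp only [Finset.mem_range] at this ⊢; omega
              · intro i hi hcon
                rcases Finset.mem_insert.1 hi with rfl | hi'
                · rcases Finset.mem_insert.1 hcon with h | h
                  · omega
                  · have := h1 h; simp only [Finset.mem_range] at this; omega
                · rcases Finset.mem_insert.1 hcon with h | h
                  · have := h1 hi'; simp only [Finset.mem_range] at this; omega
                  · exact h2 i hi' h
              · rw [Finset.card_insert_of_notMem hnotin, h3]
        have hdisj : Disjoint (A (m+1) (k+1)) ((A m k).image (insert (m+1))) := by
          rw [Finset.disjoint_left]
          intro S hS hS'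
          rw [mem_A] at hS
          simp only [Finset.mem_image, mem_A] at hS'
          obtain ⟨S', ⟨h1, -, -⟩, rfl⟩ := hS'
          have := hS.1 (Finset.mem_insert_self (m+1) S')
          simp at this
        have hinj : Set.InjOn (insert (m+1)) (A m k : Set (Finset ℕ)) := by
          intro S₁ h₁ S₂ h₂ h
          rw [Finset.mem_coe, mem_A] at h₁ h₂
          have n₁ : m + 1 ∉ S₁ := fun hc => by have := h₁.1 hc; simp at this
          have n₂ : m + 1 ∉ S₂ := fun hc => by have := h₂.1 hc; simp at this
          rw [← Finset.erase_insert n₁, ← Finset.erase_insert n₂, h]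
        rw [hdecomp, Finset.card_union_of_disjoint hdisj,
          Finset.card_image_of_injOn hinj, ih (m+1) (by omega) (k+1), ih m (by omega) k]
        rcases le_or_gt k (m+1) with hkm | hkm
        · have e1 : m + 2 + 1 - (k+1) = (m + 1 - k) + 1 := by omega
          have e2 : m + 1 + 1 - (k+1) = m + 1 - k := by omega
          rw [e1, e2, Nat.choose_succ_succ]
          exact Nat.add_comm _ _
        · have e1 : m + 2 + 1 - (k+1) = 0 := by omega
          have e2 : m + 1 + 1 - (k+1) = 0 := by omega
          have e3 : m + 1 - k = 0 := by omega
          rw [e1, e2, e3]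
          simp [Nat.choose_eq_zero_of_lt (show 0 < k + 1 by omega),
            Nat.choose_eq_zero_of_lt (show 0 < k by omega)]

/-- Representing sets with maximum `n` and `k+1` elements. -/
def G (n k : ℕ) : Finset (Finset ℕ) :=
  ((Finset.range (n+1)).powerset).filter fun S =>
    (∀ i ∈ S, 0 < i) ∧ (∀ i ∈ S, i + 1 ∉ S) ∧ S.card = k + 1 ∧ n ∈ S

lemma mem_G {n k : ℕ} {S : Finset ℕ} :
    S ∈ G n k ↔ S ⊆ Finset.range (n+1) ∧ (∀ i ∈ S, 0 < i) ∧ (∀ i ∈ S, i + 1 ∉ S) ∧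
      S.card = k + 1 ∧ n ∈ S := by
  simp [G, Finset.mem_filter, Finset.mem_powerset]

lemma G_card (n k : ℕ) (hn : 0 < n) : (G n k).card = (n - 1 - k).choose k := by
  have hb : (G n k).card = (A (n - 2) k).card := by
    refine Finset.card_bij' (fun S _ => (S.erase n).image (· - 1))
      (fun S' _ => insert n (S'.image (· + 1))) ?hi ?hj ?li ?ri
    case hi =>
      intro S hS
      rw [mem_G] at hS
      obtain ⟨hsub, hpos, hnc, hcard, hmem⟩ := hS
      rw [mem_A]
      refine ⟨?_, ?_, ?_⟩
      · intro a ha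
        simp only [Finset.mem_image, Finset.mem_erase] at ha
        obtain ⟨i, ⟨hin, hiS⟩, rfl⟩ := ha
        have h1 := hpos i hiS
        have h2 : i < n + 1 := Finset.mem_range.1 (hsub hiS)
        have h3 : i ≠ n - 1 := by
          intro h
          have : i + 1 = n := by omega
          exact hnc i hiS (this ▸ hmem)
        simp only [Finset.mem_range]
        omega
      · intro a ha hcon
        simp only [Finset.mem_image, Finset.mem_erase] at ha hcon
        obtain ⟨i, ⟨hin, hiS⟩, rfl⟩ := ha
        obtain ⟨j, ⟨hjn, hjS⟩, hj⟩ := hcon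
        have h1 := hpos i hiS
        have h2 := hpos j hjS
        have : j = i + 1 := by omega
        exact hnc i hiS (this ▸ hjS)
      · rw [Finset.card_image_of_injOn, Finset.card_erase_of_mem hmem, hcard]
        · omega
        · intro a ha b hb hab
          simp only [Finset.coe_erase, Set.mem_diff, Finset.mem_coe] at ha hb
          have hab' : a - 1 = b - 1 := hab
          have := hpos a ha.1
          have := hpos b hb.1
          omega
    case hj =>
      intro S' hS'
      rw [mem_A] at hS'
      obtain ⟨hsub, hnc, hcard⟩ := hS'
      have hbound : ∀ i ∈ S', i < n - 2 := fun i hi => Finset.mem_range.1 (hsub hi)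
      have hnmem : n ∉ S'.image (· + 1) := by
        simp only [Finset.mem_image, not_exists]
        rintro i ⟨hi, h⟩
        have := hbound i hi
        omega
      rw [mem_G]
      refine ⟨?_, ?_, ?_, ?_, Finset.mem_insert_self _ _⟩
      · intro a ha
        rcases Finset.mem_insert.1 ha with rfl | ha'
        · simp
        · simp only [Finset.mem_image] at ha'
          obtain ⟨i, hi, rfl⟩ := ha'
          have := hbound i hi
          simp only [Finset.mem_range]
          omega
      · intro a ha
        rcases Finset.mem_insert.1 ha with rfl | ha'
        · exact hn
        · simp only [Finset.mem_image] at ha'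
          obtain ⟨i, hi, rfl⟩ := ha'
          omega
      · intro a ha hcon
        rcases Finset.mem_insert.1 ha with rfl | ha'
        · rcases Finset.mem_insert.1 hcon with h | h
          · omega
          · simp only [Finset.mem_image] at h
            obtain ⟨i, hi, h⟩ := h
            have := hbound i hi
            omega
        · simp only [Finset.mem_image] at ha'
          obtain ⟨i, hi, rfl⟩ := ha'
          rcases Finset.mem_insert.1 hcon with h | h
          · have := hbound i hi
            omega
          · simp only [Finset.mem_image] at h
            obtain ⟨j, hj, hj'⟩ := h
            have : j = i + 1 := by omega
            exact hnc i hi (this ▸ hj)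
      · rw [Finset.card_insert_of_notMem hnmem,
          Finset.card_image_of_injOn (fun a _ b _ h => by omega), hcard]
    case li =>
      intro S hS
      rw [mem_G] at hS
      obtain ⟨hsub, hpos, hnc, hcard, hmem⟩ := hS
      ext a
      simp only [Finset.mem_insert, Finset.mem_image, Finset.mem_erase]
      constructor
      · rintro (rfl | ⟨b, ⟨c, ⟨hcn, hcS⟩, rfl⟩, rfl⟩)
        · exact hmem
        · have := hpos c hcS
          have : c - 1 + 1 = c := by omega
          rwa [this]
      · intro ha
        by_cases h : a = n
        · exact Or.inl h
        · right
          have := hpos a ha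
          exact ⟨a - 1, ⟨a, ⟨h, ha⟩, rfl⟩, by omega⟩
    case ri =>
      intro S' hS'
      rw [mem_A] at hS'
      obtain ⟨hsub, hnc, hcard⟩ := hS'
      have hnmem : n ∉ S'.image (· + 1) := by
        simp only [Finset.mem_image, not_exists]
        rintro i ⟨hi, h⟩
        have := Finset.mem_range.1 (hsub hi)
        omega
      show ((insert n (S'.image (fun x => x + 1))).erase n).image (fun x => x - 1) = S'
      rw [Finset.erase_insert hnmem, Finset.image_image]
      ext a
      simp only [Finset.mem_image, Function.comp_apply]
      constructor
      · rintro ⟨i, hi, rfl⟩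
        simpa using hi
      · intro ha
        exact ⟨a, ha, by simp⟩
  rw [hb, A_card]
  rcases le_or_gt 2 n with h2 | h2
  · congr 1
    omega
  · have hn1 : n = 1 := by omega
    subst hn1
    match k with
    | 0 => rfl
    | (k+1) =>
      simp [Nat.choose_eq_zero_of_lt (show 0 < k + 1 by omega)]

/-- The number of integers `N ∈ [F_n, F_{n+1})` admitting a representation as a
sum of `k+1` non-consecutive Fibonacci numbers is `C(n-1-k, k)`. -/
theorem count_with_k_summands (n k : ℕ) (hn : 0 < n) (hk : 2 * k ≤ n - 1) :
    {N : ℕ | F n ≤ N ∧ N < F (n + 1) ∧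
        ∃ S : Finset ℕ, (∀ i ∈ S, 0 < i) ∧ (∀ i ∈ S, i + 1 ∉ S) ∧
          S.card = k + 1 ∧ N = ∑ i ∈ S, F i}.ncard
      = Nat.choose (n - 1 - k) k := by
  classical
  have hset : {N : ℕ | F n ≤ N ∧ N < F (n + 1) ∧
      ∃ S : Finset ℕ, (∀ i ∈ S, 0 < i) ∧ (∀ i ∈ S, i + 1 ∉ S) ∧
        S.card = k + 1 ∧ N = ∑ i ∈ S, F i} =
      ↑((G n k).image fun S => ∑ i ∈ S, F i) := by
    ext N
    simp only [Set.mem_setOf_eq, Finset.coe_image, Set.mem_image, Finset.mem_coe]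
    constructor
    · rintro ⟨hl, hu, S, hpos, hnc, hcard, rfl⟩
      have hne : S.Nonempty := Finset.card_pos.1 (by omega)
      set m := S.max' hne with hm
      have hmS : m ∈ S := S.max'_mem hne
      have hmax : ∀ i ∈ S, i ≤ m := fun i hi => S.le_max' i hi
      have hlow : F m ≤ ∑ i ∈ S, F i :=
        Finset.single_le_sum (fun i _ => Nat.zero_le _) hmS
      have hup : ∑ i ∈ S, F i < F (m + 1) := sum_F_lt hpos hnc hmax
      have hmn : m = n := by
        rcases lt_trichotomy m n with h | h | h
        · exfalso
          have : F (m + 1) ≤ F n := Nat.fib_mono (by omega)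
          omega
        · exact h
        · exfalso
          have : F (n + 1) ≤ F m := Nat.fib_mono (by omega)
          omega
      refine ⟨S, mem_G.2 ⟨?_, hpos, hnc, hcard, hmn ▸ hmS⟩, rfl⟩
      intro i hi
      simp only [Finset.mem_range]
      have := hmax i hi
      omega
    · rintro ⟨S, hS, rfl⟩
      rw [mem_G] at hS
      obtain ⟨hsub, hpos, hnc, hcard, hmem⟩ := hS
      refine ⟨Finset.single_le_sum (fun i _ => Nat.zero_le _) hmem,
        sum_F_lt hpos hnc (fun i hi => by have := Finset.mem_range.1 (hsub hi); omega),
        S, hpos, hnc, hcard, rfl⟩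
  rw [hset, Set.ncard_coe_finset, Finset.card_image_of_injOn, G_card n k hn]
  intro S₁ h₁ S₂ h₂ h
  rw [Finset.mem_coe, mem_G] at h₁ h₂
  exact sum_F_injOn h₁.2.1 h₂.2.1 h₁.2.2.1 h₂.2.2.1 h
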